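/- arXiv:2011.05563 — 4 statements merged into one kernel-verified Lean document; each statement's English description precedes it below -/
import Mathlib

section
/- For every α with 0 < α < 1, the infimum over x ∈ (0,1) of (1 - (1-x)·e^{αx})/x equals 1 - α. -/
theorem inf_ratio_eq_one_sub (α : ℝ) (hα : 0 < α) (hα1 : α < 1) :
    sInf ((fun x : ℝ => (1 - (1 - x) * Real.exp (α * x)) / x) '' Set.Ioo 0 1) = 1 - α := by
  set f : ℝ → ℝ := fun x => (1 - (1 - x) * Real.exp (α * x)) / x with hf
  -- lower bound: f x ≥ 1 - α on Ioo 0 1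
  have hlb : ∀ x ∈ Set.Ioo (0:ℝ) 1, 1 - α ≤ f x := by
    rintro x ⟨hx0, hx1⟩
    rw [hf, le_div_iff₀ hx0]
    have hax : α * x < 1 := by nlinarith
    have h1 : 1 - α * x ≤ Real.exp (-(α * x)) := by
      have := Real.add_one_le_exp (-(α * x)); linarith
    have h2 : (1 - α * x) * Real.exp (α * x) ≤ 1 := by
      have hpos := Real.exp_pos (α * x)
      have := mul_le_mul_of_nonneg_right h1 hpos.le
      rwa [← Real.exp_add, neg_add_cancel, Real.exp_zero] at this
    have hE := Real.exp_pos (α * x)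
    nlinarith [mul_le_mul_of_nonneg_right h2 (sub_nonneg.2 hx1.le),
      sub_pos.2 hax, mul_pos hα hx0, mul_pos (mul_pos hα hx0) hx0, sq_nonneg x]
  -- derivative of g at 0 is 1 - α
  have hax : HasDerivAt (fun x : ℝ => α * x) α 0 := by
    simpa using (hasDerivAt_id (0:ℝ)).const_mul α
  have hexp : HasDerivAt (fun x : ℝ => Real.exp (α * x)) α 0 := by
    have := (Real.hasDerivAt_exp (α * 0)).comp 0 hax
    rw [mul_zero, Real.exp_zero, one_mul] at this; exact this
  have h1x : HasDerivAt (fun x : ℝ => 1 - x) (-1) 0 := by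
    simpa using (hasDerivAt_id (0:ℝ)).const_sub 1
  have hg : HasDerivAt (fun x : ℝ => 1 - (1 - x) * Real.exp (α * x)) (1 - α) 0 := by
    have := (hasDerivAt_const (0:ℝ) (1:ℝ)).sub (h1x.mul hexp)
    rw [show (1:ℝ) - α = 0 - (-1 * Real.exp (α * 0) + (1 - 0) * α) by rw [mul_zero, Real.exp_zero]; ring]
    exact this
  have htends : Filter.Tendsto f (nhdsWithin 0 (Set.Ioo (0:ℝ) 1)) (nhds (1 - α)) := by
    have hslope := hasDerivAt_iff_tendsto_slope.1 hg
    have hmono : nhdsWithin (0:ℝ) (Set.Ioo 0 1) ≤ nhdsWithin 0 {(0:ℝ)}ᶜ :=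
      nhdsWithin_mono 0 (by intro x hx; exact ne_of_gt hx.1)
    have := hslope.mono_left hmono
    refine this.congr' ?_
    filter_upwards [self_mem_nhdsWithin] with x hx
    rw [slope_def_field]
    have hx0 : (0:ℝ) < x := hx.1
    field_simp [hf]
    simp only [hf, sub_zero, mul_zero, Real.exp_zero, one_mul, sub_self, mul_comm α x]
  have hne : (nhdsWithin (0:ℝ) (Set.Ioo 0 1)).NeBot := by
    apply mem_closure_iff_nhdsWithin_neBot.1
    rw [closure_Ioo one_ne_zero.symm]
    exact ⟨le_refl 0, by norm_num⟩
  have hbdd : BddBelow (f '' Set.Ioo (0:ℝ) 1) := by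
    refine ⟨1 - α, ?_⟩
    rintro y ⟨x, hx, rfl⟩
    exact hlb x hx
  have hnonempty : (f '' Set.Ioo (0:ℝ) 1).Nonempty :=
    ⟨f (1/2), ⟨1/2, by norm_num, rfl⟩⟩
  apply le_antisymm
  · refine ge_of_tendsto htends ?_
    filter_upwards [self_mem_nhdsWithin] with x hx
    exact csInf_le hbdd ⟨x, hx, rfl⟩
  · exact le_csInf hnonempty (by rintro y ⟨x, hx, rfl⟩; exact hlb x hx)
end

section
/- Let N ≥ 1 and let p_1, ..., p_N ∈ (0,1]. Define V(h) = ∑_j h_j/p_j for h ∈ ℝ^N and λ* = ∑_j 1/p_j. Then for every h ∈ ℝ^N and every i, p_i·V(e_i·1 + (h+1)_{-i}) + (1-p_i)·V(h+1) = ∑_j h_j/p_j - h_i + ∑_j 1/p_j, where the first argument denotes the vector obtained from h+1 by setting the i-th coordinate to 1. Consequently, λ* + V(h) = min_i { p_i·V(1, (h+1)_{-i}) + (1-p_i)·V(h+1) } + max_i h_i. -/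
theorem bellman_solution (N : ℕ) (hN : 1 ≤ N) (p : Fin N → ℝ)
    (hp : ∀ i, 0 < p i ∧ p i ≤ 1) (h : Fin N → ℝ) :
    (∀ i : Fin N,
      p i * (∑ j, (Function.update (fun j => h j + 1) i 1) j / p j) +
          (1 - p i) * (∑ j, (h j + 1) / p j) =
        (∑ j, h j / p j) - h i + ∑ j, 1 / p j) ∧
    ((∑ j, 1 / p j) + (∑ j, h j / p j) =
      (Finset.univ.inf' ⟨⟨0, by omega⟩, Finset.mem_univ _⟩
          (fun i : Fin N =>
            p i * (∑ j, (Function.update (fun j => h j + 1) i 1) j / p j) +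
              (1 - p i) * (∑ j, (h j + 1) / p j))) +
        Finset.univ.sup' ⟨⟨0, by omega⟩, Finset.mem_univ _⟩ h) := by
  have key : ∀ i : Fin N,
      p i * (∑ j, (Function.update (fun j => h j + 1) i 1) j / p j) +
          (1 - p i) * (∑ j, (h j + 1) / p j) =
        (∑ j, h j / p j) - h i + ∑ j, 1 / p j := by
    intro i
    have hpi := (hp i).1.ne'
    have hupd : (∑ j, (Function.update (fun j => h j + 1) i 1) j / p j)
        = (∑ j, (h j + 1) / p j) - (h i + 1) / p i + 1 / p i := by
      have : (fun j => (Function.update (fun j => h j + 1) i 1) j / p j)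
          = Function.update (fun j => (h j + 1) / p j) i (1 / p i) := by
        funext j
        by_cases hj : j = i
        · subst hj; simp
        · simp [Function.update_of_ne hj]
      rw [this, Finset.sum_update_of_mem (Finset.mem_univ i)]
      rw [Finset.sum_eq_sum_sdiff_singleton_add (Finset.mem_univ i)
        (fun j => (h j + 1) / p j)]
      ring
    have hsplit : (∑ j, (h j + 1) / p j) = (∑ j, h j / p j) + ∑ j, 1 / p j := by
      rw [← Finset.sum_add_distrib]
      exact Finset.sum_congr rfl fun j _ => add_div _ _ _
    rw [hupd, hsplit]
    field_simp
    ring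
  refine ⟨key, ?_⟩
  set ne1 : (Finset.univ : Finset (Fin N)).Nonempty :=
    ⟨⟨0, by omega⟩, Finset.mem_univ _⟩
  set C : ℝ := (∑ j, h j / p j) + ∑ j, 1 / p j with hC
  have heq : (Finset.univ.inf' ne1
      (fun i : Fin N =>
        p i * (∑ j, (Function.update (fun j => h j + 1) i 1) j / p j) +
          (1 - p i) * (∑ j, (h j + 1) / p j))) =
      Finset.univ.inf' ne1 (fun i => C - h i) := by
    apply Finset.inf'_congr ne1 rfl
    intro i _
    rw [key i]; rw [hC]; ring
  rw [heq]
  have hinf : Finset.univ.inf' ne1 (fun i => C - h i)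
      = C - Finset.univ.sup' ne1 h := by
    apply le_antisymm
    · obtain ⟨i, _, hi⟩ := Finset.exists_mem_eq_sup' ne1 h
      calc Finset.univ.inf' ne1 (fun i => C - h i) ≤ C - h i :=
            Finset.inf'_le _ (Finset.mem_univ i)
        _ = C - Finset.univ.sup' ne1 h := by rw [← hi]
    · apply Finset.le_inf'
      intro i _
      have := Finset.le_sup' h (Finset.mem_univ i)
      linarith
  rw [hinf]; rw [hC]; ring
end

section
/- Let N ≥ 1, T ≥ 1 be integers and for each i let T_{i,1}, ..., T_{i,n_i}, D_i be nonnegative reals with ∑_{j=1}^{n_i} T_{i,j} + D_i = T. Then (1/(N·T)) · ∑_{i=1}^N ( ∑_{j=1}^{n_i} T_{i,j}(T_{i,j}+1)/2 + D_i(D_i+1)/2 ) ≥ (T/(2N)) · ∑_{i=1}^N 1/(n_i + 1) + 1/2. -/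
theorem aoi_sample_path_lower_bound (N T : ℕ) (hN : 1 ≤ N) (hT : 1 ≤ T)
    (n : Fin N → ℕ) (Tij : ∀ i : Fin N, Fin (n i) → ℝ) (D : Fin N → ℝ)
    (hTij : ∀ i j, 0 ≤ Tij i j) (hD : ∀ i, 0 ≤ D i)
    (hsum : ∀ i, (∑ j, Tij i j) + D i = T) :
    (1 / ((N : ℝ) * T)) *
        ∑ i, ((∑ j, Tij i j * (Tij i j + 1) / 2) + D i * (D i + 1) / 2) ≥
      ((T : ℝ) / (2 * N)) * (∑ i, 1 / ((n i : ℝ) + 1)) + 1 / 2 := by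
  have hN0 : (0:ℝ) < N := by exact_mod_cast hN
  have hT0 : (0:ℝ) < T := by exact_mod_cast hT
  -- per-i inequality from Cauchy-Schwarz
  have key : ∀ i, (T:ℝ)^2 / ((n i : ℝ) + 1) ≤ (∑ j, Tij i j ^ 2) + D i ^ 2 := by
    intro i
    have hcard : (0:ℝ) < (n i : ℝ) + 1 := by positivity
    have h := sq_sum_le_card_mul_sum_sq (s := (Finset.univ : Finset (Fin (n i + 1))))
      (f := Fin.cons (D i) (Tij i))
    simp only [Fin.sum_univ_succ, Fin.cons_zero, Fin.cons_succ, Finset.card_univ,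
      Fintype.card_fin] at h
    rw [div_le_iff₀ hcard]
    have hs : D i + ∑ j, Tij i j = (T:ℝ) := by rw [add_comm]; exact hsum i
    calc (T:ℝ)^2 = (D i + ∑ j, Tij i j)^2 := by rw [hs]
      _ ≤ ((n i : ℝ) + 1) * (D i ^ 2 + ∑ j, Tij i j ^ 2) := by
          exact_mod_cast h
      _ = ((∑ j, Tij i j ^ 2) + D i ^ 2) * ((n i : ℝ) + 1) := by ring
  have sum_key : ∑ i, ((T:ℝ)^2 / ((n i : ℝ) + 1) + T) / 2 ≤
      ∑ i, ((∑ j, Tij i j * (Tij i j + 1) / 2) + D i * (D i + 1) / 2) := by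
    apply Finset.sum_le_sum
    intro i _
    have h1 : (∑ j, Tij i j * (Tij i j + 1) / 2) + D i * (D i + 1) / 2
        = ((∑ j, Tij i j ^ 2) + D i ^ 2 + (((∑ j, Tij i j) + D i))) / 2 := by
      have : ∀ j, Tij i j * (Tij i j + 1) / 2 = Tij i j ^ 2 / 2 + Tij i j / 2 := by
        intro j; ring
      simp_rw [this, Finset.sum_add_distrib, ← Finset.sum_div]
      ring
    rw [h1, hsum i]
    have := key i
    linarith
  have hfinal : (1 / ((N : ℝ) * T)) * ∑ i, ((T:ℝ)^2 / ((n i : ℝ) + 1) + T) / 2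
      = ((T : ℝ) / (2 * N)) * (∑ i, 1 / ((n i : ℝ) + 1)) + 1 / 2 := by
    have hexp : ∀ i : Fin N, ((T:ℝ)^2 / ((n i : ℝ) + 1) + T) / 2
        = (T:ℝ)^2 / 2 * (1 / ((n i : ℝ) + 1)) + T / 2 := by
      intro i; ring
    simp_rw [hexp, Finset.sum_add_distrib, ← Finset.mul_sum, Finset.sum_const,
      Finset.card_univ, Fintype.card_fin, nsmul_eq_mul]
    field_simp
  rw [ge_iff_le, ← hfinal]
  apply mul_le_mul_of_nonneg_left sum_key
  positivity
end

section
/- Let 0 < p_min ≤ p_max ≤ 1 with p_max + p_min > 1, and let N ≥ 1 be an integer. Then for every integer k ≥ N, ∑_{j=0}^{N-1} C(k, j)·p_max^j·(1 - p_min)^{k-j} ≤ c·k^N·(1 - p_min)^k, where c = (1 - p_min)/((N-1)!·(p_max + p_min - 1)) · ((p_max/(1 - p_min))^N - 1), assuming p_max/(1-p_min) ≠ 1. -/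
lemma choose_mul_factorial_le_pow (k N j : ℕ) (hj : j < N) (hk : N ≤ k) :
    k.choose j * (N - 1).factorial ≤ k ^ N := by
  obtain ⟨m, hm⟩ : ∃ m, N - 1 = j + m := ⟨N - 1 - j, by omega⟩
  have hk1 : 1 ≤ k := by omega
  calc k.choose j * (N - 1).factorial
      = k.choose j * (j.factorial * (j + 1).ascFactorial m) := by
        rw [hm, Nat.factorial_mul_ascFactorial]
    _ = (j.factorial * k.choose j) * (j + 1).ascFactorial m := by ring
    _ = k.descFactorial j * (j + 1).ascFactorial m := by
        rw [Nat.descFactorial_eq_factorial_mul_choose]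
    _ ≤ k ^ j * (j + m) ^ m :=
        Nat.mul_le_mul (Nat.descFactorial_le_pow k j) (Nat.ascFactorial_le_pow_add j m)
    _ ≤ k ^ j * k ^ m := by
        have : j + m ≤ k := by omega
        exact Nat.mul_le_mul_left _ (Nat.pow_le_pow_left this m)
    _ = k ^ (j + m) := (pow_add k j m).symm
    _ ≤ k ^ N := Nat.pow_le_pow_right hk1 (by omega)

theorem tail_prob_bound (pmin pmax : ℝ) (h0 : 0 < pmin) (h1 : pmin ≤ pmax)
    (h2 : pmax ≤ 1) (h3 : 1 < pmax + pmin) (hne : pmax / (1 - pmin) ≠ 1)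
    (N : ℕ) (hN : 1 ≤ N) (k : ℕ) (hk : N ≤ k) :
    ∑ j ∈ Finset.range N, (k.choose j : ℝ) * pmax ^ j * (1 - pmin) ^ (k - j) ≤
      ((1 - pmin) / (((N - 1).factorial : ℝ) * (pmax + pmin - 1)) *
          ((pmax / (1 - pmin)) ^ N - 1)) * (k : ℝ) ^ N * (1 - pmin) ^ k := by
  rcases eq_or_lt_of_le (le_trans h1 h2) with heq | hlt
  · -- pmin = 1
    have hq : (1 : ℝ) - pmin = 0 := by linarith
    have hk1 : k ≠ 0 := by omega
    rw [hq]
    have : ∑ j ∈ Finset.range N, (k.choose j : ℝ) * pmax ^ j * (0:ℝ) ^ (k - j) = 0 := by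
      apply Finset.sum_eq_zero
      intro j hj
      have hjk : j < N := Finset.mem_range.1 hj
      have : k - j ≠ 0 := by omega
      rw [zero_pow this, mul_zero]
    rw [this, zero_pow hk1, mul_zero]
  · obtain ⟨q, hqdef⟩ : ∃ q : ℝ, q = 1 - pmin := ⟨_, rfl⟩
    have hq : 0 < q := by rw [hqdef]; linarith
    obtain ⟨r, hrdef⟩ : ∃ r : ℝ, r = pmax / q := ⟨_, rfl⟩
    rw [← hqdef, ← hrdef]
    have hqr : pmax = r * q := by rw [hrdef]; field_simp
    have hr1 : 1 < r := by
      rw [hrdef, lt_div_iff₀ hq, one_mul, hqdef]; linarith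
    have hfacpos : (0:ℝ) < ((N - 1).factorial : ℝ) := by positivity
    -- rewrite each summand
    have hterm : ∀ j ∈ Finset.range N,
        (k.choose j : ℝ) * pmax ^ j * q ^ (k - j) = (k.choose j : ℝ) * r ^ j * q ^ k := by
      intro j hj
      have hjk : j ≤ k := le_trans (Nat.le_of_lt (Finset.mem_range.1 hj)) hk
      have hqq : q ^ j * q ^ (k - j) = q ^ k := by
        rw [← pow_add]; congr 1; omega
      calc (k.choose j : ℝ) * pmax ^ j * q ^ (k - j)
          = (k.choose j : ℝ) * r ^ j * (q ^ j * q ^ (k - j)) := by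
            rw [hqr, mul_pow]; ring
        _ = (k.choose j : ℝ) * r ^ j * q ^ k := by rw [hqq]
    rw [Finset.sum_congr rfl hterm, ← Finset.sum_mul]
    -- bound the sum
    have hbound : ∑ j ∈ Finset.range N, (k.choose j : ℝ) * r ^ j ≤
        ((k:ℝ) ^ N / ((N - 1).factorial : ℝ)) * ((r ^ N - 1) / (r - 1)) := by
      have hgeom : ∑ j ∈ Finset.range N, r ^ j = (r ^ N - 1) / (r - 1) :=
        geom_sum_eq (by linarith) N
      calc ∑ j ∈ Finset.range N, (k.choose j : ℝ) * r ^ j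
          ≤ ∑ j ∈ Finset.range N, ((k:ℝ) ^ N / ((N - 1).factorial : ℝ)) * r ^ j := by
            apply Finset.sum_le_sum
            intro j hj
            have hjN : j < N := Finset.mem_range.1 hj
            have hle : (k.choose j : ℝ) * ((N - 1).factorial : ℝ) ≤ (k:ℝ) ^ N := by
              have := choose_mul_factorial_le_pow k N j hjN hk
              exact_mod_cast this
            have hch : (k.choose j : ℝ) ≤ (k:ℝ) ^ N / ((N - 1).factorial : ℝ) :=
              (le_div_iff₀ hfacpos).2 hle
            have hr0 : (0:ℝ) ≤ r ^ j := by positivity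
            exact mul_le_mul_of_nonneg_right hch hr0
        _ = ((k:ℝ) ^ N / ((N - 1).factorial : ℝ)) * ((r ^ N - 1) / (r - 1)) := by
            rw [← Finset.mul_sum, hgeom]
    have hpmin : pmin = 1 - q := by rw [hqdef]; ring
    have hp : pmax + pmin - 1 = q * (r - 1) := by rw [hqr, hpmin]; ring
    have hconst : (q / (((N - 1).factorial : ℝ) * (pmax + pmin - 1)) * (r ^ N - 1)) * (k:ℝ) ^ N
        = ((k:ℝ) ^ N / ((N - 1).factorial : ℝ)) * ((r ^ N - 1) / (r - 1)) := by
      rw [hp]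
      have h1' : (r - 1) ≠ 0 := by linarith
      field_simp
    calc (∑ j ∈ Finset.range N, (k.choose j : ℝ) * r ^ j) * q ^ k
        ≤ (((k:ℝ) ^ N / ((N - 1).factorial : ℝ)) * ((r ^ N - 1) / (r - 1))) * q ^ k :=
          mul_le_mul_of_nonneg_right hbound (by positivity)
      _ = (q / (((N - 1).factorial : ℝ) * (pmax + pmin - 1)) * (r ^ N - 1)) * (k:ℝ) ^ N * q ^ k := by
          rw [hconst]
end
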